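/- Gödel's natural deduction system G is sound and complete for classical Boolean semantics: a sequent Δ → P is provable in G if and only if every Boolean valuation (assignment of truth values to propositional variables, extended to formulas by interpreting ∼ as classical negation and ⊃ as material implication) that makes every formula in Δ true also makes P true. In particular, P is a classical tautology if and only if the sequent with empty left-hand side → P is provable in G. -/

import Mathlib

/-- Formulas of Gödel's propositional language: variables, negation ∼, implication ⊃. -/
inductive Fml : Type
  | var : Nat → Fml
  | neg : Fml → Fml
  | imp : Fml → Fml → Fml

open Fml

/-- Provability of sequents Δ → P in Gödel's natural deduction system G.
    `Δ, P` is represented by `Δ ++ [P]` and `P, Δ` by `P :: Δ`. -/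
inductive GProof : List Fml → Fml → Prop
  /-- axiom schema P → P -/
  | ax (P : Fml) : GProof [P] P
  /-- left thinning -/
  | thinL (P : Fml) {Δ : List Fml} {Q : Fml} : GProof Δ Q → GProof (P :: Δ) Q
  /-- right thinning -/
  | thinR (P : Fml) {Δ : List Fml} {Q : Fml} : GProof Δ Q → GProof (Δ ++ [P]) Q
  /-- implication introduction -/
  | impI {Δ : List Fml} {P Q : Fml} : GProof (Δ ++ [P]) Q → GProof Δ (imp P Q)
  /-- additive implication elimination -/
  | impE {Δ : List Fml} {P Q : Fml} : GProof Δ P → GProof Δ (imp P Q) → GProof Δ Q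
  /-- strong reductio ad absurdum -/
  | raa {Δ : List Fml} {P Q : Fml} :
      GProof (Δ ++ [neg P]) Q → GProof (Δ ++ [neg P]) (neg Q) → GProof Δ P

/-- Boolean valuation of formulas: ∼ as negation, ⊃ as material implication. -/
def evalG (v : Nat → Bool) : Fml → Bool
  | var n => v n
  | neg P => !(evalG v P)
  | imp P Q => !(evalG v P) || evalG v Q

/-! ### Auxiliary development -/

/-- Auxiliary natural deduction with membership-based contexts. -/
inductive Nd : List Fml → Fml → Prop
  | ax {Δ : List Fml} {P : Fml} : P ∈ Δ → Nd Δ P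
  | impI {Δ : List Fml} {P Q : Fml} : Nd (P :: Δ) Q → Nd Δ (imp P Q)
  | impE {Δ : List Fml} {P Q : Fml} : Nd Δ P → Nd Δ (imp P Q) → Nd Δ Q
  | raa {Δ : List Fml} {P Q : Fml} :
      Nd (neg P :: Δ) Q → Nd (neg P :: Δ) (neg Q) → Nd Δ P

theorem Nd.weak {Δ Δ' : List Fml} {P : Fml} (h : Nd Δ P) (hs : Δ ⊆ Δ') : Nd Δ' P := by
  induction h generalizing Δ' with
  | ax hm => exact Nd.ax (hs hm)
  | impI _ ih => exact Nd.impI (ih (List.cons_subset_cons _ hs))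
  | impE _ _ ih1 ih2 => exact Nd.impE (ih1 hs) (ih2 hs)
  | raa _ _ ih1 ih2 =>
      exact Nd.raa (ih1 (List.cons_subset_cons _ hs)) (ih2 (List.cons_subset_cons _ hs))

theorem Nd.weak1 {Δ : List Fml} {A P : Fml} (h : Nd Δ P) : Nd (A :: Δ) P :=
  h.weak (List.subset_cons_self _ _)

theorem Nd.negE {Δ : List Fml} {P Q : Fml} (h1 : Nd Δ P) (h2 : Nd Δ (neg P)) : Nd Δ Q :=
  Nd.raa h1.weak1 h2.weak1

theorem Nd.dne {Δ : List Fml} {P : Fml} (h : Nd Δ (neg (neg P))) : Nd Δ P :=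
  Nd.raa (Nd.ax (List.mem_cons_self)) h.weak1

theorem Nd.dni {Δ : List Fml} {P : Fml} (h : Nd Δ P) : Nd Δ (neg (neg P)) :=
  Nd.raa h.weak1 (Nd.dne (Nd.ax (List.mem_cons_self)))

theorem Nd.impOfNeg {Δ : List Fml} {P Q : Fml} (h : Nd Δ (neg P)) : Nd Δ (imp P Q) :=
  Nd.impI (Nd.negE (Nd.ax (List.mem_cons_self)) h.weak1)

theorem Nd.impOfConcl {Δ : List Fml} {P Q : Fml} (h : Nd Δ Q) : Nd Δ (imp P Q) :=
  Nd.impI h.weak1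

theorem Nd.negImp {Δ : List Fml} {P Q : Fml} (h1 : Nd Δ P) (h2 : Nd Δ (neg Q)) :
    Nd Δ (neg (imp P Q)) :=
  Nd.raa (Nd.impE h1.weak1 (Nd.dne (Nd.ax (List.mem_cons_self)))) h2.weak1

theorem Nd.byCases {Δ : List Fml} {A P : Fml}
    (h1 : Nd (A :: Δ) P) (h2 : Nd (neg A :: Δ) P) : Nd Δ P := by
  have hA : Nd (neg P :: Δ) A :=
    Nd.raa (h2.weak (by intro x hx; simp at hx ⊢; tauto))
      (Nd.ax (by simp))
  have hP : Nd (neg P :: Δ) P :=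
    Nd.impE hA ((Nd.impI h1).weak1)
  exact Nd.raa hP (Nd.ax (List.mem_cons_self))

/-- Sign of a formula relative to a truth value. -/
def sgn (b : Bool) (P : Fml) : Fml := if b then P else neg P

/-- Variables occurring in a formula. -/
def varsG : Fml → List Nat
  | var n => [n]
  | neg P => varsG P
  | imp P Q => varsG P ++ varsG Q

theorem kalmar (v : Nat → Bool) :
    ∀ (P : Fml) (L : List Nat), varsG P ⊆ L →
      Nd (L.map fun n => sgn (v n) (var n)) (sgn (evalG v P) P) := by
  intro P
  induction P with
  | var n =>
      intro L hL
      have hn : n ∈ L := hL (by simp [varsG])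
      have : sgn (v n) (var n) ∈ L.map fun n => sgn (v n) (var n) :=
        List.mem_map_of_mem hn
      simpa [evalG] using Nd.ax this
  | neg P ih =>
      intro L hL
      have h := ih L (by simpa [varsG] using hL)
      cases hv : evalG v P with
      | true =>
          rw [hv] at h
          simp only [sgn, if_pos rfl] at h
          simpa [evalG, sgn, hv] using h.dni
      | false =>
          rw [hv] at h
          simpa [evalG, sgn, hv] using h
  | imp P Q ihP ihQ =>
      intro L hL
      have hLP : varsG P ⊆ L := fun x hx => hL (by simp [varsG]; tauto)
      have hLQ : varsG Q ⊆ L := fun x hx => hL (by simp [varsG]; tauto)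
      have hP := ihP L hLP
      have hQ := ihQ L hLQ
      cases hp : evalG v P with
      | false =>
          rw [hp] at hP; simp only [sgn, if_neg Bool.false_ne_true] at hP
          simpa [evalG, sgn, hp] using hP.impOfNeg
      | true =>
          rw [hp] at hP; simp only [sgn, if_pos rfl] at hP
          cases hq : evalG v Q with
          | true =>
              rw [hq] at hQ; simp only [sgn, if_pos rfl] at hQ
              simpa [evalG, sgn, hp, hq] using hQ.impOfConcl
          | false =>
              rw [hq] at hQ; simp only [sgn, if_neg Bool.false_ne_true] at hQ
              simpa [evalG, sgn, hp, hq] using hP.negImp hQ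

theorem elimVars :
    ∀ (L : List Nat), L.Nodup → ∀ P : Fml,
      (∀ v : Nat → Bool, Nd (L.map fun n => sgn (v n) (var n)) P) → Nd [] P := by
  intro L
  induction L with
  | nil => intro _ P h; simpa using h (fun _ => true)
  | cons n L ih =>
      intro hnd P h
      obtain ⟨hn, hnd'⟩ := List.nodup_cons.mp hnd
      apply ih hnd' P
      intro v
      have hmap : ∀ b : Bool,
          L.map (fun m => sgn (Function.update v n b m) (var m))
            = L.map (fun m => sgn (v m) (var m)) := by
        intro b
        apply List.map_congr_left
        intro m hm
        rw [Function.update_of_ne (by rintro rfl; exact hn hm)]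
      have h1 := h (Function.update v n true)
      have h2 := h (Function.update v n false)
      rw [List.map_cons, hmap] at h1 h2
      simp only [Function.update_self, sgn, if_pos rfl] at h1
      simp only [Function.update_self, sgn, if_neg Bool.false_ne_true] at h2
      exact Nd.byCases h1 h2

theorem tautNd {P : Fml} (h : ∀ v : Nat → Bool, evalG v P = true) : Nd [] P := by
  apply elimVars ((varsG P).dedup) (List.nodup_dedup _) P
  intro v
  have hk := kalmar v P ((varsG P).dedup) (List.subset_dedup _)
  rw [h v] at hk
  simpa [sgn] using hk

/-! ### GProof structural lemmas -/

theorem GProof.prepend (Γ : List Fml) {Δ : List Fml} {P : Fml} (h : GProof Δ P) :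
    GProof (Γ ++ Δ) P := by
  induction Γ with
  | nil => exact h
  | cons A Γ ih => exact GProof.thinL A ih

theorem GProof.append {Δ : List Fml} {P : Fml} (h : GProof Δ P) (Γ : List Fml) :
    GProof (Δ ++ Γ) P := by
  induction Γ using List.reverseRecOn with
  | nil => simpa using h
  | append_singleton Γ A ih =>
      rw [← List.append_assoc]
      exact GProof.thinR A ih

theorem GProof.memAx {Δ : List Fml} {P : Fml} (h : P ∈ Δ) : GProof Δ P := by
  obtain ⟨s, t, rfl⟩ := List.append_of_mem h
  apply GProof.prepend s
  have : GProof ([P] ++ t) P := (GProof.ax P).append t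
  simpa using this

theorem GProof.curry : ∀ (Δ : List Fml) (P : Fml), GProof Δ P → GProof [] (Δ.foldr imp P) := by
  intro Δ
  induction Δ using List.reverseRecOn with
  | nil => intro P h; exact h
  | append_singleton Δ Q ih =>
      intro P h
      rw [List.foldr_append]
      exact ih _ (GProof.impI h)

theorem GProof.uncurry : ∀ (Γ : List Fml) {Δ : List Fml} {P : Fml},
    GProof Δ (Γ.foldr imp P) → (∀ Q ∈ Γ, GProof Δ Q) → GProof Δ P := by
  intro Γ
  induction Γ with
  | nil => intro Δ P h _; exact h
  | cons A Γ ih =>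
      intro Δ P h hm
      exact ih (GProof.impE (hm A (by simp)) h) (fun Q hQ => hm Q (by simp [hQ]))

theorem GProof.weak {Δ Δ' : List Fml} {P : Fml} (h : GProof Δ P) (hs : Δ ⊆ Δ') :
    GProof Δ' P := by
  have h1 : GProof [] (Δ.foldr imp P) := GProof.curry Δ P h
  have h2 : GProof Δ' (Δ.foldr imp P) := by simpa using h1.prepend Δ'
  exact GProof.uncurry Δ h2 (fun Q hQ => GProof.memAx (hs hQ))

theorem nd_of_g {Δ : List Fml} {P : Fml} (h : GProof Δ P) : Nd Δ P := by
  induction h with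
  | ax P => exact Nd.ax (by simp)
  | thinL P _ ih => exact ih.weak1
  | thinR P _ ih => exact ih.weak (by intro x hx; simp [hx])
  | impI _ ih => exact Nd.impI (ih.weak (by intro x hx; simp at hx ⊢; tauto))
  | impE _ _ ih1 ih2 => exact Nd.impE ih1 ih2
  | raa _ _ ih1 ih2 =>
      exact Nd.raa (ih1.weak (by intro x hx; simp at hx ⊢; tauto))
        (ih2.weak (by intro x hx; simp at hx ⊢; tauto))

theorem g_of_nd {Δ : List Fml} {P : Fml} (h : Nd Δ P) : GProof Δ P := by
  induction h with
  | ax hm => exact GProof.memAx hm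
  | impI _ ih => exact GProof.impI (ih.weak (by intro x hx; simp at hx ⊢; tauto))
  | impE _ _ ih1 ih2 => exact GProof.impE ih1 ih2
  | raa _ _ ih1 ih2 =>
      exact GProof.raa (ih1.weak (by intro x hx; simp at hx ⊢; tauto))
        (ih2.weak (by intro x hx; simp at hx ⊢; tauto))

theorem gsound {Δ : List Fml} {P : Fml} (h : GProof Δ P) :
    ∀ v : Nat → Bool, (∀ Q ∈ Δ, evalG v Q = true) → evalG v P = true := by
  induction h with
  | ax P => intro v hv; exact hv P (by simp)
  | thinL P _ ih => intro v hv; exact ih v (fun Q hQ => hv Q (by simp [hQ]))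
  | thinR P _ ih => intro v hv; exact ih v (fun Q hQ => hv Q (by simp [hQ]))
  | impI h ih =>
      intro v hv
      simp only [evalG]
      cases hp : evalG v _ with
      | false => simp
      | true =>
          have := ih v (fun Q hQ => by
            rcases List.mem_append.mp hQ with h | h
            · exact hv Q h
            · simp at h; subst h; exact hp)
          simp [this]
  | impE _ _ ih1 ih2 =>
      intro v hv
      have h1 := ih1 v hv
      have h2 := ih2 v hv
      simp only [evalG, h1] at h2
      simpa using h2
  | @raa Δ' P' Q' _ _ ih1 ih2 =>
      intro v hv
      by_contra hne
      have hp : evalG v P' = false := by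
        cases h : evalG v P' with
        | true => exact absurd h hne
        | false => rfl
      have hctx : ∀ R ∈ Δ' ++ [neg P'], evalG v R = true := by
        intro R hR
        rcases List.mem_append.mp hR with h | h
        · exact hv R h
        · simp at h; subst h; simp [evalG, hp]
      have h1 := ih1 v hctx
      have h2 := ih2 v hctx
      simp [evalG, h1] at h2

theorem eval_foldr (v : Nat → Bool) :
    ∀ (Δ : List Fml) (P : Fml),
      evalG v (Δ.foldr imp P) = true ↔
        ((∀ Q ∈ Δ, evalG v Q = true) → evalG v P = true) := by
  intro Δ
  induction Δ with
  | nil => intro P; simp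
  | cons A Δ ih =>
      intro P
      simp only [List.foldr_cons, evalG, Bool.or_eq_true, Bool.not_eq_true', ih]
      constructor
      · rintro (hA | hI) hall
        · exact absurd (hall A (by simp)) (by simp [hA])
        · exact hI (fun Q hQ => hall Q (by simp [hQ]))
      · intro h
        cases hA : evalG v A with
        | false => exact Or.inl rfl
        | true =>
            right
            intro hall
            apply h
            intro Q hQ
            rcases List.mem_cons.mp hQ with rfl | hQ
            · exact hA
            · exact hall Q hQ

theorem gcomplete {Δ : List Fml} {P : Fml}
    (h : ∀ v : Nat → Bool, (∀ Q ∈ Δ, evalG v Q = true) → evalG v P = true) : GProof Δ P := by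
  have ht : ∀ v : Nat → Bool, evalG v (Δ.foldr imp P) = true :=
    fun v => (eval_foldr v Δ P).mpr (h v)
  have h0 : GProof [] (Δ.foldr imp P) := g_of_nd (tautNd ht)
  exact GProof.uncurry Δ (h0.weak (by simp)) (fun Q hQ => GProof.memAx hQ)

/-- Gödel's system G is sound and complete for classical Boolean semantics; in
    particular, P is a tautology iff the sequent → P with empty left side is provable. -/
theorem soundness_completeness :
    (∀ (Δ : List Fml) (P : Fml),
      GProof Δ P ↔
        ∀ v : Nat → Bool, (∀ Q ∈ Δ, evalG v Q = true) → evalG v P = true) ∧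
    (∀ P : Fml, (∀ v : Nat → Bool, evalG v P = true) ↔ GProof [] P) := by
  constructor
  · intro Δ P
    exact ⟨fun h => gsound h, fun h => gcomplete h⟩
  · intro P
    exact ⟨fun h => gcomplete (fun v _ => h v), fun h v => gsound h v (by simp)⟩
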